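/- Let M, p, q ≥ 1 and let f be a p×q matrix of rational functions of M complex variables analytic at the origin: f_{il} = P_{il}/Q_{il} with P_{il}, Q_{il} ∈ ℂ[z_1,…,z_M] and Q_{il}(0) ≠ 0 for all entries. Then there exist N ∈ ℕ, matrices D ∈ ℂ^{p×q}, C ∈ ℂ^{p×N}, A_1,…,A_M ∈ ℂ^{N×N}, B_1,…,B_M ∈ ℂ^{N×q}, and ε > 0 such that for every z ∈ ℂ^M with ‖z‖ < ε: all Q_{il}(z) ≠ 0, the matrix I_N − Σ_{k=1}^M z_k A_k is invertible, and f(z) = D + C (I_N − Σ_{k=1}^M z_k A_k)^{−1} (Σ_{k=1}^M z_k B_k). -/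

import Mathlib

open Matrix MvPolynomial

namespace Stmt2Aux

variable {M : ℕ}

def RlzOn (n : Type) [Fintype n] [DecidableEq n] {α β : Type} [Fintype α] [Fintype β]
    (f : (Fin M → ℂ) → Matrix α β ℂ) : Prop :=
  ∃ (D : Matrix α β ℂ) (C : Matrix α n ℂ) (A : Fin M → Matrix n n ℂ)
    (B : Fin M → Matrix n β ℂ) (ε : ℝ), 0 < ε ∧
    ∀ z : Fin M → ℂ, (∀ k, ‖z k‖ < ε) →
      IsUnit ((1 : Matrix n n ℂ) - ∑ k, z k • A k) ∧
      f z = D + C * ((1 : Matrix n n ℂ) - ∑ k, z k • A k)⁻¹ * ∑ k, z k • B k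

def Rlz {α β : Type} [Fintype α] [Fintype β] (f : (Fin M → ℂ) → Matrix α β ℂ) : Prop :=
  ∃ N : ℕ, RlzOn (Fin N) f

/-- transfer a realization along an equivalence of state spaces -/
lemma RlzOn.toRlz {n : Type} [Fintype n] [DecidableEq n] {α β : Type} [Fintype α] [Fintype β]
    {f : (Fin M → ℂ) → Matrix α β ℂ} (h : RlzOn n f) : Rlz f := by
  obtain ⟨D, C, A, B, ε, hε, hr⟩ := h
  set e : n ≃ Fin (Fintype.card n) := Fintype.equivFin n
  refine ⟨Fintype.card n, D, C.submatrix id e.symm, fun k => (A k).submatrix e.symm e.symm,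
    fun k => (B k).submatrix e.symm id, ε, hε, fun z hz => ?_⟩
  obtain ⟨hu, he⟩ := hr z hz
  set K : Matrix n n ℂ := (1 : Matrix n n ℂ) - ∑ k, z k • A k with hK
  have hA : (1 : Matrix (Fin (Fintype.card n)) (Fin (Fintype.card n)) ℂ)
      - ∑ k, z k • (A k).submatrix e.symm e.symm = K.submatrix e.symm e.symm := by
    ext i j
    simp [hK, Matrix.sum_apply, Matrix.one_apply, e.symm.injective.eq_iff]
  have hudet : IsUnit (K.submatrix (⇑e.symm) (⇑e.symm)) := by
    rw [Matrix.isUnit_iff_isUnit_det, Matrix.det_submatrix_equiv_self,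
      ← Matrix.isUnit_iff_isUnit_det]
    exact hu
  refine ⟨hA ▸ hudet, ?_⟩
  rw [hA, Matrix.inv_submatrix_equiv]
  have hB : ∑ k, z k • (B k).submatrix (⇑e.symm) id
      = (∑ k, z k • B k).submatrix (⇑e.symm) id := by
    ext i j; simp [Matrix.sum_apply]
  rw [hB]
  have : C.submatrix id (⇑e.symm) * K⁻¹.submatrix (⇑e.symm) (⇑e.symm)
      = (C * K⁻¹).submatrix id (⇑e.symm) := Matrix.submatrix_mul_equiv _ _ _ _ _
  rw [this, Matrix.submatrix_mul_equiv, Matrix.submatrix_id_id, he]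

lemma Rlz.congr {α β : Type} [Fintype α] [Fintype β] {f g : (Fin M → ℂ) → Matrix α β ℂ}
    (h : Rlz f) (hfg : ∀ z, f z = g z) : Rlz g := by
  obtain ⟨N, D, C, A, B, ε, hε, hr⟩ := h
  exact ⟨N, D, C, A, B, ε, hε, fun z hz => ⟨(hr z hz).1, (hfg z) ▸ (hr z hz).2⟩⟩

lemma Rlz.const {α β : Type} [Fintype α] [Fintype β] (D : Matrix α β ℂ) :
    Rlz (fun _ : Fin M → ℂ => D) := by
  refine ⟨0, D, 0, 0, 0, 1, one_pos, fun z hz => ?_⟩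
  constructor
  · simp
  · simp
lemma small_ne {g : (Fin M → ℂ) → ℂ} (hg : Continuous g) (h0 : g 0 ≠ 0) :
    ∃ ε : ℝ, 0 < ε ∧ ∀ z : Fin M → ℂ, (∀ k, ‖z k‖ < ε) → g z ≠ 0 := by
  have ho : IsOpen {z : Fin M → ℂ | g z ≠ 0} := isOpen_compl_singleton.preimage hg
  obtain ⟨ε, hε, hball⟩ := Metric.isOpen_iff.mp ho 0 h0
  refine ⟨ε, hε, fun z hz => hball ?_⟩
  rw [Metric.mem_ball, dist_pi_lt_iff hε]
  intro k
  simpa [dist_eq_norm] using hz k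

lemma pencil_small {n : Type} [Fintype n] [DecidableEq n] (A : Fin M → Matrix n n ℂ) :
    ∃ ε : ℝ, 0 < ε ∧ ∀ z : Fin M → ℂ, (∀ k, ‖z k‖ < ε) →
      IsUnit ((1 : Matrix n n ℂ) - ∑ k, z k • A k) := by
  have hc : Continuous fun z : Fin M → ℂ => ((1 : Matrix n n ℂ) - ∑ k, z k • A k).det := by
    apply Continuous.matrix_det
    exact continuous_const.sub
      (continuous_finset_sum _ fun k _ => (continuous_apply k).smul continuous_const)
  have h0 : ((1 : Matrix n n ℂ) - ∑ k, (0 : Fin M → ℂ) k • A k).det ≠ 0 := by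
    simp
  obtain ⟨ε, hε, h⟩ := small_ne hc h0
  exact ⟨ε, hε, fun z hz =>
    (Matrix.isUnit_iff_isUnit_det _).mpr (isUnit_iff_ne_zero.mpr (h z hz))⟩
lemma sum_fromBlocks (f : Fin M → Matrix n₁ n₁ ℂ) (g : Fin M → Matrix n₁ n₂ ℂ)
    (h : Fin M → Matrix n₂ n₁ ℂ) (i : Fin M → Matrix n₂ n₂ ℂ) :
    ∑ k, fromBlocks (f k) (g k) (h k) (i k)
      = fromBlocks (∑ k, f k) (∑ k, g k) (∑ k, h k) (∑ k, i k) := by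
  ext (x | x) (y | y) <;> simp [Matrix.sum_apply]

lemma sum_fromRows (f : Fin M → Matrix n₁ β ℂ) (g : Fin M → Matrix n₂ β ℂ) :
    ∑ k, fromRows (f k) (g k) = fromRows (∑ k, f k) (∑ k, g k) := by
  ext (x | x) y <;> simp [Matrix.sum_apply]

lemma smul_fromRows (c : ℂ) (f : Matrix n₁ β ℂ) (g : Matrix n₂ β ℂ) :
    c • fromRows f g = fromRows (c • f) (c • g) := by
  ext (x | x) y <;> simp

-- pencil of a block-upper-triangular family
lemma pencil_blocks (z : Fin M → ℂ) (A₁ : Fin M → Matrix n₁ n₁ ℂ)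
    (G : Fin M → Matrix n₁ n₂ ℂ) (A₂ : Fin M → Matrix n₂ n₂ ℂ) [DecidableEq n₁] [DecidableEq n₂] :
    (1 : Matrix (n₁ ⊕ n₂) (n₁ ⊕ n₂) ℂ) - ∑ k, z k • fromBlocks (A₁ k) (G k) 0 (A₂ k)
      = fromBlocks ((1 : Matrix n₁ n₁ ℂ) - ∑ k, z k • A₁ k) (-(∑ k, z k • G k)) 0
          ((1 : Matrix n₂ n₂ ℂ) - ∑ k, z k • A₂ k) := by
  ext (x | x) (y | y) <;> simp [Matrix.sum_apply, Matrix.one_apply]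

lemma Rlz.add {α β : Type} [Fintype α] [Fintype β] {f g : (Fin M → ℂ) → Matrix α β ℂ}
    (hf : Rlz f) (hg : Rlz g) : Rlz (fun z => f z + g z) := by
  obtain ⟨N₁, D₁, C₁, A₁, B₁, ε₁, hε₁, h₁⟩ := hf
  obtain ⟨N₂, D₂, C₂, A₂, B₂, ε₂, hε₂, h₂⟩ := hg
  apply RlzOn.toRlz (n := Fin N₁ ⊕ Fin N₂)
  refine ⟨D₁ + D₂, fromCols C₁ C₂, fun k => fromBlocks (A₁ k) 0 0 (A₂ k),
    fun k => fromRows (B₁ k) (B₂ k), min ε₁ ε₂, lt_min hε₁ hε₂, fun z hz => ?_⟩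
  obtain ⟨hu₁, he₁⟩ := h₁ z fun k => (hz k).trans_le (min_le_left _ _)
  obtain ⟨hu₂, he₂⟩ := h₂ z fun k => (hz k).trans_le (min_le_right _ _)
  have hA := pencil_blocks z A₁ (fun _ => 0) A₂
  simp only [Finset.sum_const_zero, smul_zero, neg_zero] at hA
  rw [hA]
  refine ⟨Matrix.isUnit_fromBlocks_zero₂₁.mpr ⟨hu₁, hu₂⟩, ?_⟩
  have hinv : (fromBlocks ((1 : Matrix (Fin N₁) (Fin N₁) ℂ) - ∑ k, z k • A₁ k) 0 0
      ((1 : Matrix (Fin N₂) (Fin N₂) ℂ) - ∑ k, z k • A₂ k))⁻¹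
      = fromBlocks ((1 - ∑ k, z k • A₁ k)⁻¹) 0 0 ((1 - ∑ k, z k • A₂ k)⁻¹) := by
    rw [Matrix.inv_fromBlocks_zero₂₁_of_isUnit_iff _ _ _ (iff_of_true hu₁ hu₂)]
    simp
  have hB : ∑ k, z k • fromRows (B₁ k) (B₂ k)
      = fromRows (∑ k, z k • B₁ k) (∑ k, z k • B₂ k) := by
    rw [Finset.sum_congr rfl fun k _ => smul_fromRows (z k) (B₁ k) (B₂ k), sum_fromRows]
  show f z + g z = _
  rw [hinv, hB, fromCols_mul_fromBlocks, fromCols_mul_fromRows, he₁, he₂]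
  simp only [Matrix.mul_zero, Matrix.zero_mul, add_zero, zero_add]
  abel

lemma Rlz.mul {α β γ : Type} [Fintype α] [Fintype β] [Fintype γ]
    {f : (Fin M → ℂ) → Matrix α β ℂ} {g : (Fin M → ℂ) → Matrix β γ ℂ}
    (hf : Rlz f) (hg : Rlz g) : Rlz (fun z => f z * g z) := by
  obtain ⟨N₁, D₁, C₁, A₁, B₁, ε₁, hε₁, h₁⟩ := hf
  obtain ⟨N₂, D₂, C₂, A₂, B₂, ε₂, hε₂, h₂⟩ := hg
  apply RlzOn.toRlz (n := Fin N₁ ⊕ Fin N₂)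
  refine ⟨D₁ * D₂, fromCols C₁ (D₁ * C₂), fun k => fromBlocks (A₁ k) (B₁ k * C₂) 0 (A₂ k),
    fun k => fromRows (B₁ k * D₂) (B₂ k), min ε₁ ε₂, lt_min hε₁ hε₂, fun z hz => ?_⟩
  obtain ⟨hu₁, he₁⟩ := h₁ z fun k => (hz k).trans_le (min_le_left _ _)
  obtain ⟨hu₂, he₂⟩ := h₂ z fun k => (hz k).trans_le (min_le_right _ _)
  set K₁ := (1 : Matrix (Fin N₁) (Fin N₁) ℂ) - ∑ k, z k • A₁ k with hK₁
  set K₂ := (1 : Matrix (Fin N₂) (Fin N₂) ℂ) - ∑ k, z k • A₂ k with hK₂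
  set b₁ := ∑ k, z k • B₁ k with hb₁
  set b₂ := ∑ k, z k • B₂ k with hb₂
  have hG : ∑ k, z k • (B₁ k * C₂) = b₁ * C₂ := by
    rw [hb₁, Matrix.sum_mul]
    exact Finset.sum_congr rfl fun k _ => by rw [Matrix.smul_mul]
  have hA := pencil_blocks z A₁ (fun k => B₁ k * C₂) A₂
  rw [hG] at hA
  rw [hA]
  refine ⟨Matrix.isUnit_fromBlocks_zero₂₁.mpr ⟨hu₁, hu₂⟩, ?_⟩
  have hinv : (fromBlocks K₁ (-(b₁ * C₂)) 0 K₂)⁻¹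
      = fromBlocks K₁⁻¹ (K₁⁻¹ * (b₁ * C₂) * K₂⁻¹) 0 K₂⁻¹ := by
    rw [Matrix.inv_fromBlocks_zero₂₁_of_isUnit_iff _ _ _ (iff_of_true hu₁ hu₂)]
    simp [Matrix.mul_neg, Matrix.neg_mul]
  have hBD : ∑ k, z k • (B₁ k * D₂) = b₁ * D₂ := by
    rw [hb₁, Matrix.sum_mul]
    exact Finset.sum_congr rfl fun k _ => by rw [Matrix.smul_mul]
  have hB : ∑ k, z k • fromRows (B₁ k * D₂) (B₂ k) = fromRows (b₁ * D₂) b₂ := by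
    rw [Finset.sum_congr rfl fun k _ => smul_fromRows (z k) (B₁ k * D₂) (B₂ k), sum_fromRows,
      hBD]
  show f z * g z = _
  rw [hinv, hB, fromCols_mul_fromBlocks, fromCols_mul_fromRows, he₁, he₂]
  simp only [Matrix.mul_zero, Matrix.zero_mul, add_zero, zero_add, Matrix.mul_add,
    Matrix.add_mul, Matrix.mul_assoc]
  abel

/-- 1×1 matrix from a scalar -/
def sm (c : ℂ) : Matrix Unit Unit ℂ := Matrix.of fun _ _ => c

@[simp] lemma sm_apply (c : ℂ) (i j : Unit) : sm c i j = c := rfl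

lemma sm_mul_sm (a b : ℂ) : sm a * sm b = sm (a * b) := by
  ext i j
  simp [sm, Matrix.mul_apply]

lemma sm_add_sm (a b : ℂ) : sm a + sm b = sm (a + b) := by
  ext i j
  simp [sm]

lemma Rlz.coord (k₀ : Fin M) : Rlz (fun z : Fin M → ℂ => sm (z k₀)) := by
  refine ⟨1, 0, Matrix.of fun _ _ => (1 : ℂ), 0,
    fun k => if k = k₀ then Matrix.of fun _ _ => (1 : ℂ) else 0, 1, one_pos, fun z hz => ?_⟩
  have hsum : ∑ k : Fin M, z k • (if k = k₀ then (Matrix.of fun _ _ => (1 : ℂ) :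
        Matrix (Fin 1) Unit ℂ) else 0)
      = z k₀ • (Matrix.of fun _ _ => (1 : ℂ) : Matrix (Fin 1) Unit ℂ) := by
    rw [Finset.sum_eq_single k₀]
    · simp
    · intro k _ hk; simp [hk]
    · simp
  constructor
  · simp
  · rw [hsum]
    ext i j
    simp [sm, Matrix.mul_apply]

lemma Rlz.polyEval (Q : MvPolynomial (Fin M) ℂ) :
    Rlz (fun z : Fin M → ℂ => sm (eval z Q)) := by
  induction Q using MvPolynomial.induction_on with
  | C a =>
      have := Rlz.const (α := Unit) (β := Unit) (M := M) (sm a)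
      exact this.congr (fun z => by simp)
  | add p q hp hq =>
      have := hp.add hq
      exact this.congr (fun z => by simp [sm_add_sm])
  | mul_X p k hp =>
      have := hp.mul (Rlz.coord k)
      exact this.congr (fun z => by simp [sm_mul_sm])

lemma sm_one : sm 1 = (1 : Matrix Unit Unit ℂ) := by
  ext i j
  cases i; cases j
  simp [sm, Matrix.one_apply]

lemma Rlz.inv {f : (Fin M → ℂ) → ℂ} (hf : Rlz fun z => sm (f z)) (hc : Continuous f)
    (h0 : f 0 ≠ 0) : Rlz fun z => sm (f z)⁻¹ := by
  obtain ⟨n, D, C, A, B, ε₁, hε₁, h⟩ := hf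
  have h00 := (h 0 (fun k => by simpa using hε₁)).2
  have hD : D = sm (f 0) := by
    simp only [Pi.zero_apply, zero_smul, Finset.sum_const_zero, sub_zero, inv_one,
      Matrix.mul_one, Matrix.mul_zero, add_zero] at h00
    exact h00.symm
  have hdu : IsUnit D := by
    rw [Matrix.isUnit_iff_isUnit_det, hD, Matrix.det_unique]
    exact isUnit_iff_ne_zero.mpr h0
  have hDdet : IsUnit D.det := (Matrix.isUnit_iff_isUnit_det D).mp hdu
  set E := D⁻¹ with hE
  have hDE : D * E = 1 := Matrix.mul_nonsing_inv D hDdet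
  have hED : E * D = 1 := Matrix.nonsing_inv_mul D hDdet
  set A' : Fin M → Matrix (Fin n) (Fin n) ℂ := fun k => A k - B k * E * C with hA'
  obtain ⟨ε₂, hε₂, h₂⟩ := pencil_small A'
  obtain ⟨ε₃, hε₃, h₃⟩ := small_ne hc h0
  refine ⟨n, E, -(E * C), A', fun k => B k * E, min ε₁ (min ε₂ ε₃),
    lt_min hε₁ (lt_min hε₂ hε₃), fun z hz => ?_⟩
  have hz₁ : ∀ k, ‖z k‖ < ε₁ := fun k => (hz k).trans_le (min_le_left _ _)
  have hz₂ : ∀ k, ‖z k‖ < ε₂ := fun k =>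
    (hz k).trans_le ((min_le_right _ _).trans (min_le_left _ _))
  have hz₃ : ∀ k, ‖z k‖ < ε₃ := fun k =>
    (hz k).trans_le ((min_le_right _ _).trans (min_le_right _ _))
  obtain ⟨hKu, hfz⟩ := h z hz₁
  replace hfz : sm (f z)
      = D + C * ((1 : Matrix (Fin n) (Fin n) ℂ) - ∑ k, z k • A k)⁻¹ * ∑ k, z k • B k := hfz
  refine ⟨h₂ z hz₂, ?_⟩
  set K := (1 : Matrix (Fin n) (Fin n) ℂ) - ∑ k, z k • A k with hK
  set b := ∑ k, z k • B k with hb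
  have hKdet : IsUnit K.det := (Matrix.isUnit_iff_isUnit_det K).mp hKu
  set L := K⁻¹ with hL
  have hKL : K * L = 1 := Matrix.mul_nonsing_inv K hKdet
  have hLK : L * K = 1 := Matrix.nonsing_inv_mul K hKdet
  have hK'eq : (1 : Matrix (Fin n) (Fin n) ℂ) - ∑ k, z k • A' k = K + b * (E * C) := by
    have h1 : ∀ k : Fin M, z k • A' k = z k • A k - z k • B k * (E * C) := by
      intro k
      simp only [hA']
      rw [smul_sub, Matrix.mul_assoc, ← Matrix.smul_mul]
    rw [hK, hb, Finset.sum_congr rfl fun k _ => h1 k, Finset.sum_sub_distrib, ← Matrix.sum_mul]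
    abel
  have hK'u : IsUnit (K + b * (E * C)) := hK'eq ▸ h₂ z hz₂
  have hK'det : IsUnit (K + b * (E * C)).det := (Matrix.isUnit_iff_isUnit_det _).mp hK'u
  set L' := (K + b * (E * C))⁻¹ with hL'
  have hK'L' : (K + b * (E * C)) * L' = 1 := Matrix.mul_nonsing_inv _ hK'det
  have hbE : ∑ k, z k • (B k * E) = b * E := by
    rw [hb, Matrix.sum_mul]
    exact Finset.sum_congr rfl fun k _ => by rw [Matrix.smul_mul]
  show sm (f z)⁻¹ = E + -(E * C) * ((1 : Matrix (Fin n) (Fin n) ℂ) - ∑ k, z k • A' k)⁻¹ *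
    ∑ k, z k • (B k * E)
  rw [hK'eq, hbE]
  have hfzne : f z ≠ 0 := h₃ z hz₃
  have main : L * (b * E) = L' * (b * E) + L * (b * (E * (C * (L' * (b * E))))) := by
    have h1 : (K + b * (E * C)) * (L' * (b * E)) = b * E := by
      rw [← Matrix.mul_assoc, hK'L', Matrix.one_mul]
    calc L * (b * E) = L * ((K + b * (E * C)) * (L' * (b * E))) := by rw [h1]
      _ = L * (K * (L' * (b * E))) + L * (b * (E * (C * (L' * (b * E))))) := by
          rw [Matrix.add_mul, Matrix.mul_add]
          simp only [Matrix.mul_assoc]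
      _ = L' * (b * E) + L * (b * (E * (C * (L' * (b * E))))) := by
          rw [← Matrix.mul_assoc L K, hLK, Matrix.one_mul]
  have hDEC : ∀ X : Matrix Unit Unit ℂ, D * (E * X) = X := fun X => by
    rw [← Matrix.mul_assoc, hDE, Matrix.one_mul]
  have key : sm (f z) * (E + -(E * C) * L' * (b * E)) = 1 := by
    rw [hfz]
    simp only [Matrix.mul_add, Matrix.add_mul, Matrix.neg_mul, Matrix.mul_neg, Matrix.mul_assoc]
    rw [hDE, hDEC]
    rw [main]
    simp only [Matrix.mul_add]
    abel
  have hsm1 : sm (f z)⁻¹ * sm (f z) = 1 := by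
    rw [sm_mul_sm, inv_mul_cancel₀ hfzne, sm_one]
  calc sm (f z)⁻¹ = sm (f z)⁻¹ * 1 := (Matrix.mul_one _).symm
    _ = sm (f z)⁻¹ * (sm (f z) * (E + -(E * C) * L' * (b * E))) := by rw [key]
    _ = (sm (f z)⁻¹ * sm (f z)) * (E + -(E * C) * L' * (b * E)) := by
        rw [← Matrix.mul_assoc]
    _ = E + -(E * C) * L' * (b * E) := by rw [hsm1, Matrix.one_mul]

lemma Rlz.finsetSum {ι α β : Type} [Fintype α] [Fintype β] (s : Finset ι)
    (F : ι → (Fin M → ℂ) → Matrix α β ℂ) (h : ∀ i ∈ s, Rlz (F i)) :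
    Rlz (fun z => ∑ i ∈ s, F i z) := by
  classical
  induction s using Finset.cons_induction with
  | empty => exact (Rlz.const 0).congr (by simp)
  | cons a s ha ih =>
      have h1 := (h a (Finset.mem_cons_self a s)).add
        (ih (fun i hi => h i (Finset.mem_cons_of_mem hi)))
      exact h1.congr (fun z => by rw [Finset.sum_cons])

def colM {p : ℕ} (i : Fin p) : Matrix (Fin p) Unit ℂ :=
  Matrix.of fun r _ => if r = i then 1 else 0

def rowM {q : ℕ} (l : Fin q) : Matrix Unit (Fin q) ℂ :=
  Matrix.of fun _ c => if c = l then 1 else 0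

lemma col_sm_row {p q : ℕ} (i : Fin p) (l : Fin q) (s : ℂ) :
    colM i * sm s * rowM l = Matrix.of fun r c => if r = i ∧ c = l then s else 0 := by
  ext r c
  simp only [colM, rowM, sm, Matrix.mul_apply, Matrix.of_apply, Finset.univ_unique,
    Finset.sum_singleton]
  by_cases h1 : r = i <;> by_cases h2 : c = l <;> simp [h1, h2]

lemma sum_embed {p q : ℕ} (v : Fin p → Fin q → ℂ) :
    ∑ i : Fin p, ∑ l : Fin q,
        (Matrix.of fun r c => if r = i ∧ c = l then v i l else 0 : Matrix (Fin p) (Fin q) ℂ)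
      = Matrix.of v := by
  ext r c
  simp [Matrix.sum_apply, ite_and, Finset.sum_ite_eq]

lemma rlz_ratio {p q : ℕ} (P Q : Fin p → Fin q → MvPolynomial (Fin M) ℂ)
    (hQ : ∀ i l, MvPolynomial.eval (0 : Fin M → ℂ) (Q i l) ≠ 0) :
    Rlz (fun z : Fin M → ℂ =>
      (Matrix.of fun i l => eval z (P i l) / eval z (Q i l) : Matrix (Fin p) (Fin q) ℂ)) := by
  have h1 : ∀ (i : Fin p) (l : Fin q),
      Rlz (fun z : Fin M → ℂ => sm (eval z (P i l) / eval z (Q i l))) := by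
    intro i l
    have hQi : Rlz (fun z : Fin M → ℂ => sm (eval z (Q i l))⁻¹) :=
      (Rlz.polyEval (Q i l)).inv (MvPolynomial.continuous_eval _) (hQ i l)
    exact ((Rlz.polyEval (P i l)).mul hQi).congr
      (fun z => by rw [sm_mul_sm, div_eq_mul_inv])
  have h2 : ∀ (i : Fin p) (l : Fin q),
      Rlz (fun z : Fin M → ℂ => colM i * sm (eval z (P i l) / eval z (Q i l)) * rowM l) :=
    fun i l => ((Rlz.const (colM i)).mul (h1 i l)).mul (Rlz.const (rowM l))
  have h3 : Rlz (fun z : Fin M → ℂ => ∑ i : Fin p, ∑ l : Fin q,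
      colM i * sm (eval z (P i l) / eval z (Q i l)) * rowM l) :=
    Rlz.finsetSum _ _ (fun i _ => Rlz.finsetSum _ _ (fun l _ => h2 i l))
  refine h3.congr (fun z => ?_)
  simp only [col_sm_row]
  exact sum_embed _

lemma coord_le_norm {M : ℕ} (z : EuclideanSpace ℂ (Fin M)) (k : Fin M) : ‖z k‖ ≤ ‖z‖ := by
  rw [EuclideanSpace.norm_eq]
  rw [show ‖z k‖ = Real.sqrt (‖z k‖ ^ 2) from (Real.sqrt_sq (norm_nonneg _)).symm]
  apply Real.sqrt_le_sqrt
  exact Finset.single_le_sum (f := fun i => ‖z i‖ ^ 2) (fun i _ => sq_nonneg _)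
    (Finset.mem_univ k)

end Stmt2Aux

/-- Every `ℂ^{p×q}`-valued rational function of `M` complex variables which is analytic
at the origin admits a realization `f(z) = D + C (I − Σ z_k A_k)⁻¹ (Σ z_k B_k)`
valid in a neighborhood of the origin. -/
theorem stmt2 (M p q : ℕ) (hM : 1 ≤ M) (hp : 1 ≤ p) (hq : 1 ≤ q)
    (P Q : Fin p → Fin q → MvPolynomial (Fin M) ℂ)
    (hQ : ∀ i l, MvPolynomial.eval (0 : Fin M → ℂ) (Q i l) ≠ 0) :
    ∃ (N : ℕ) (D : Matrix (Fin p) (Fin q) ℂ) (C : Matrix (Fin p) (Fin N) ℂ)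
      (A : Fin M → Matrix (Fin N) (Fin N) ℂ) (B : Fin M → Matrix (Fin N) (Fin q) ℂ)
      (ε : ℝ), 0 < ε ∧
      ∀ z : EuclideanSpace ℂ (Fin M), ‖z‖ < ε →
        (∀ i l, MvPolynomial.eval (fun k => z k) (Q i l) ≠ 0) ∧
        IsUnit ((1 : Matrix (Fin N) (Fin N) ℂ) - ∑ k, z k • A k) ∧
        (Matrix.of fun i l =>
            MvPolynomial.eval (fun k => z k) (P i l) /
              MvPolynomial.eval (fun k => z k) (Q i l)) =
          D + C * ((1 : Matrix (Fin N) (Fin N) ℂ) - ∑ k, z k • A k)⁻¹ * (∑ k, z k • B k) := by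
  classical
  open Stmt2Aux MvPolynomial in
  obtain ⟨N, D, C, A, B, ε₀, hε₀, hreal⟩ := Stmt2Aux.rlz_ratio P Q hQ
  have hcont : Continuous fun z : Fin M → ℂ => ∏ i : Fin p, ∏ l : Fin q, eval z (Q i l) :=
    continuous_finset_prod _ fun i _ => continuous_finset_prod _ fun l _ =>
      MvPolynomial.continuous_eval _
  have h00 : (∏ i : Fin p, ∏ l : Fin q, eval (0 : Fin M → ℂ) (Q i l)) ≠ 0 :=
    Finset.prod_ne_zero_iff.mpr fun i _ =>
      Finset.prod_ne_zero_iff.mpr fun l _ => hQ i l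
  obtain ⟨ε₁, hε₁, hprod⟩ := Stmt2Aux.small_ne hcont h00
  refine ⟨N, D, C, A, B, min ε₀ ε₁, lt_min hε₀ hε₁, fun z hz => ?_⟩
  have hcoord : ∀ k, ‖z k‖ < min ε₀ ε₁ := fun k =>
    lt_of_le_of_lt (Stmt2Aux.coord_le_norm z k) hz
  have hc₀ : ∀ k, ‖z k‖ < ε₀ := fun k => (hcoord k).trans_le (min_le_left _ _)
  have hc₁ : ∀ k, ‖z k‖ < ε₁ := fun k => (hcoord k).trans_le (min_le_right _ _)
  obtain ⟨hKu, heq⟩ := hreal (fun k => z k) hc₀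
  have hprodz := hprod (fun k => z k) hc₁
  refine ⟨?_, hKu, heq⟩
  intro i l
  have h1 := Finset.prod_ne_zero_iff.mp hprodz i (Finset.mem_univ i)
  exact Finset.prod_ne_zero_iff.mp h1 l (Finset.mem_univ l)
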